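/- Let V be a finite set, μ a probability measure on A^V with A finite, and let I be a uniformly random element of V. Then (1/|V|)·H(μ) = ∫_0^1 ∫ E_I[H_μ(σ_I | σ_{S \ {I}})] dθ_p(S) dp, where θ_p is the law of a random subset S ⊆ V containing each element of V independently with probability p. -/

import Mathlib

open scoped Classical BigOperators

noncomputable section

/-- Shannon entropy of a finitely supported probability vector (natural log,
with the convention `0 · log 0 = 0`, automatic since `Real.log 0 = 0`). -/
def shEnt {Ω : Type*} [Fintype Ω] (p : Ω → ℝ) : ℝ :=
  -∑ ω, p ω * Real.log (p ω)

/-- Marginal of a probability vector on `V → A` on the coordinates in `S`. -/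
def marg {V A : Type*} [Fintype V] [Fintype A] (μ : (V → A) → ℝ) (S : Finset V) :
    ({x // x ∈ S} → A) → ℝ :=
  fun η => ∑ x : V → A, if (∀ i : S, x i = η i) then μ x else 0

/-- Conditional Shannon entropy `H_μ(σ_v | σ_S)`, via the chain rule
`H(σ_{S ∪ {v}}) - H(σ_S)`. -/
def condEnt {V A : Type*} [Fintype V] [Fintype A] (μ : (V → A) → ℝ) (v : V)
    (S : Finset V) : ℝ :=
  shEnt (marg μ (insert v S)) - shEnt (marg μ S)

lemma sum_erase_swap {V : Type*} [Fintype V] (F : Finset V → V → ℝ) :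
    ∑ S : Finset V, ∑ v ∈ S, F (S.erase v) v = ∑ S : Finset V, ∑ v ∈ Sᶜ, F S v := by
  rw [Finset.sum_sigma', Finset.sum_sigma']
  refine Finset.sum_nbij' (fun a => ⟨a.1.erase a.2, a.2⟩) (fun a => ⟨insert a.2 a.1, a.2⟩)
    ?_ ?_ ?_ ?_ ?_
  · rintro ⟨S, v⟩ hm
    simp only [Finset.mem_sigma, Finset.mem_univ, true_and] at hm ⊢
    simp [Finset.mem_compl]
  · rintro ⟨S, v⟩ hm
    simp only [Finset.mem_sigma, Finset.mem_univ, true_and, Finset.mem_compl] at hm ⊢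
    simp
  · rintro ⟨S, v⟩ hm
    simp only [Finset.mem_sigma, Finset.mem_univ, true_and] at hm
    simp [Finset.insert_erase hm]
  · rintro ⟨S, v⟩ hm
    simp only [Finset.mem_sigma, Finset.mem_univ, true_and, Finset.mem_compl] at hm
    simp [Finset.erase_insert hm]
  · rintro ⟨S, v⟩ _
    rfl

lemma key_alg {V : Type*} [Fintype V] (h : Finset V → ℝ) (p : ℝ) :
    (∑ S : Finset V, h S *
      (((S.card : ℝ) * p ^ (S.card - 1)) * (1 - p) ^ (Fintype.card V - S.card) +
        p ^ S.card * (((Fintype.card V - S.card : ℕ) : ℝ) *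
          (1 - p) ^ (Fintype.card V - S.card - 1) * (0 - 1))))
    = ∑ S : Finset V, p ^ S.card * (1 - p) ^ (Fintype.card V - S.card) *
        (∑ v ∈ S, (h S - h (S.erase v)) + ∑ v ∈ Sᶜ, (h (insert v S) - h S)) := by
  set n := Fintype.card V with hn
  have hcard : ∀ S : Finset V, S.card ≤ n := fun S => Finset.card_le_univ S
  have hE2 : (∑ S : Finset V, ∑ v ∈ S,
        p ^ (S.card - 1) * (1 - p) ^ (n - S.card) * h (S.erase v))
      = ∑ S : Finset V, ((n - S.card : ℕ) : ℝ) *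
          (p ^ S.card * (1 - p) ^ (n - S.card - 1) * h S) :=
    calc (∑ S : Finset V, ∑ v ∈ S, p ^ (S.card - 1) * (1 - p) ^ (n - S.card) * h (S.erase v))
        = ∑ S : Finset V, ∑ v ∈ S,
            p ^ (S.erase v).card * (1 - p) ^ (n - (S.erase v).card - 1) * h (S.erase v) := by
          refine Finset.sum_congr rfl fun S _ => Finset.sum_congr rfl fun v hv => ?_
          have h1 : 1 ≤ S.card := Finset.card_pos.mpr ⟨v, hv⟩
          rw [Finset.card_erase_of_mem hv]
          have e2 : n - (S.card - 1) - 1 = n - S.card := by omega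
          rw [e2]
      _ = ∑ S : Finset V, ∑ v ∈ Sᶜ, p ^ S.card * (1 - p) ^ (n - S.card - 1) * h S :=
          sum_erase_swap (fun T _ => p ^ T.card * (1 - p) ^ (n - T.card - 1) * h T)
      _ = ∑ S : Finset V, ((n - S.card : ℕ) : ℝ) *
            (p ^ S.card * (1 - p) ^ (n - S.card - 1) * h S) := by
          refine Finset.sum_congr rfl fun S _ => ?_
          rw [Finset.sum_const, Finset.card_compl, nsmul_eq_mul]
  have hE1 : (∑ S : Finset V, ∑ v ∈ S,
        p ^ (S.card - 1) * (1 - p) ^ (n - S.card) * h S)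
      = ∑ S : Finset V, (S.card : ℝ) * (p ^ (S.card - 1) * (1 - p) ^ (n - S.card) * h S) := by
    refine Finset.sum_congr rfl fun S _ => ?_
    rw [Finset.sum_const, nsmul_eq_mul]
  have hLHS : (∑ S : Finset V, h S *
      (((S.card : ℝ) * p ^ (S.card - 1)) * (1 - p) ^ (n - S.card) +
        p ^ S.card * (((n - S.card : ℕ) : ℝ) * (1 - p) ^ (n - S.card - 1) * (0 - 1))))
      = ∑ S : Finset V, ∑ v ∈ S,
          p ^ (S.card - 1) * (1 - p) ^ (n - S.card) * (h S - h (S.erase v)) := by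
    have hsub : ∀ S : Finset V, ∑ v ∈ S,
        p ^ (S.card - 1) * (1 - p) ^ (n - S.card) * (h S - h (S.erase v))
        = (∑ v ∈ S, p ^ (S.card - 1) * (1 - p) ^ (n - S.card) * h S)
          - ∑ v ∈ S, p ^ (S.card - 1) * (1 - p) ^ (n - S.card) * h (S.erase v) := by
      intro S
      rw [← Finset.sum_sub_distrib]
      exact Finset.sum_congr rfl fun v _ => by ring
    rw [Finset.sum_congr rfl fun S _ => hsub S, Finset.sum_sub_distrib, hE1, hE2]
    rw [← Finset.sum_sub_distrib]
    exact Finset.sum_congr rfl fun S _ => by ring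
  rw [hLHS]
  have hsplit : ∀ S : Finset V,
      p ^ S.card * (1 - p) ^ (n - S.card) *
        (∑ v ∈ S, (h S - h (S.erase v)) + ∑ v ∈ Sᶜ, (h (insert v S) - h S))
      = (∑ v ∈ S, p ^ S.card * (1 - p) ^ (n - S.card) * (h S - h (S.erase v)))
        + ∑ v ∈ Sᶜ, p ^ S.card * (1 - p) ^ (n - S.card) * (h (insert v S) - h S) := by
    intro S
    rw [mul_add, Finset.mul_sum, Finset.mul_sum]
  rw [Finset.sum_congr rfl fun S _ => hsplit S, Finset.sum_add_distrib]
  have hB : (∑ S : Finset V, ∑ v ∈ Sᶜ,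
        p ^ S.card * (1 - p) ^ (n - S.card) * (h (insert v S) - h S))
      = ∑ S : Finset V, ∑ v ∈ S,
          p ^ (S.erase v).card * (1 - p) ^ (n - (S.erase v).card) * (h S - h (S.erase v)) := by
    rw [← sum_erase_swap (fun T v => p ^ T.card * (1 - p) ^ (n - T.card) * (h (insert v T) - h T))]
    refine Finset.sum_congr rfl fun S _ => Finset.sum_congr rfl fun v hv => ?_
    rw [Finset.insert_erase hv]
  rw [hB, ← Finset.sum_add_distrib]
  refine Finset.sum_congr rfl fun S _ => ?_
  rw [← Finset.sum_add_distrib]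
  refine Finset.sum_congr rfl fun v hv => ?_
  have h1 : 1 ≤ S.card := Finset.card_pos.mpr ⟨v, hv⟩
  obtain ⟨k, hk⟩ : ∃ k, S.card = k + 1 := ⟨S.card - 1, by omega⟩
  have h2 : S.card ≤ n := hcard S
  rw [Finset.card_erase_of_mem hv, hk]
  have e1 : k + 1 - 1 = k := rfl
  have e2 : n - k = (n - (k + 1)) + 1 := by omega
  rw [e1, e2, pow_succ, pow_succ]
  ring

lemma shEnt_marg_empty {A V : Type*} [Fintype A] [Fintype V] (μ : (V → A) → ℝ)
    (hsum : ∑ x, μ x = 1) : shEnt (marg μ (∅ : Finset V)) = 0 := by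
  have hm : ∀ η, marg μ (∅ : Finset V) η = 1 := by
    intro η
    unfold marg
    rw [← hsum]
    refine Finset.sum_congr rfl fun x _ => ?_
    rw [if_pos]
    rintro ⟨i, hi⟩
    exact absurd hi (Finset.notMem_empty i)
  unfold shEnt
  simp [hm]

lemma shEnt_marg_univ {A V : Type*} [Fintype A] [Fintype V] (μ : (V → A) → ℝ) :
    shEnt (marg μ (Finset.univ : Finset V)) = shEnt μ := by
  have key : ∀ x : V → A, marg μ Finset.univ (fun i => x i.1) = μ x := by
    intro x
    unfold marg
    have hiff : ∀ y : V → A,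
        (if (∀ i : (Finset.univ : Finset V), y i = x i.1) then μ y else 0) =
          (if y = x then μ y else 0) := by
      intro y
      congr 1
      simp only [eq_iff_iff]
      constructor
      · intro h; funext j; exact h ⟨j, Finset.mem_univ j⟩
      · intro h i; rw [h]
    rw [Finset.sum_congr rfl fun y _ => hiff y, Finset.sum_ite_eq' Finset.univ x μ]
    simp
  unfold shEnt
  let e1 : {a // a ∈ (Finset.univ : Finset V)} ≃ V :=
    Equiv.subtypeUnivEquiv (fun a => Finset.mem_univ a)
  let E : ({a // a ∈ (Finset.univ : Finset V)} → A) ≃ (V → A) :=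
    Equiv.arrowCongr e1 (Equiv.refl A)
  rw [← Equiv.sum_comp E.symm
    (fun η => marg μ Finset.univ η * Real.log (marg μ Finset.univ η))]
  congr 1
  refine Finset.sum_congr rfl fun x _ => ?_
  have hE : E.symm x = fun i => x i.1 := rfl
  rw [hE, key]


open MeasureTheory

/-- `(1/|V|)·H(μ) = ∫_0^1 ∫ E_I[H_μ(σ_I | σ_{S\{I}})] dθ_p(S) dp`,
where `θ_p(S) = p^{|S|}(1-p)^{|V|-|S|}` is Bernoulli(p) site percolation on `V`
and `I` is a uniformly random vertex. -/
theorem percolative_entropy_identity {A V : Type*} [Fintype A] [Nonempty A]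
    [Fintype V] [Nonempty V] (μ : (V → A) → ℝ)
    (hpos : ∀ x, 0 ≤ μ x) (hsum : ∑ x, μ x = 1) :
    (1 / (Fintype.card V : ℝ)) * shEnt μ =
      ∫ p in (0:ℝ)..1,
        ∑ S : Finset V,
          p ^ S.card * (1 - p) ^ (Fintype.card V - S.card) *
            ((1 / (Fintype.card V : ℝ)) * ∑ v : V, condEnt μ v (S.erase v)) := by
  classical
  set n := Fintype.card V with hn
  set G : ℝ → ℝ := fun p => ∑ S : Finset V,
      shEnt (marg μ S) * (p ^ S.card * (1 - p) ^ (n - S.card)) with hG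
  set Φ : ℝ → ℝ := fun p => ∑ S : Finset V,
      p ^ S.card * (1 - p) ^ (n - S.card) * (∑ v : V, condEnt μ v (S.erase v)) with hΦ
  have hcond : ∀ S : Finset V, (∑ v : V, condEnt μ v (S.erase v))
      = (∑ v ∈ S, (shEnt (marg μ S) - shEnt (marg μ (S.erase v)))) +
        ∑ v ∈ Sᶜ, (shEnt (marg μ (insert v S)) - shEnt (marg μ S)) := by
    intro S
    rw [← Finset.sum_add_sum_compl S (fun v => condEnt μ v (S.erase v))]
    congr 1
    · refine Finset.sum_congr rfl fun v hv => ?_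
      unfold condEnt
      rw [Finset.insert_erase hv]
    · refine Finset.sum_congr rfl fun v hv => ?_
      rw [Finset.mem_compl] at hv
      unfold condEnt
      rw [Finset.erase_eq_of_notMem hv]
  have hderiv : ∀ p ∈ Set.uIcc (0:ℝ) 1, HasDerivAt G (Φ p) p := by
    intro p _
    have hd : HasDerivAt G (∑ S : Finset V, shEnt (marg μ S) *
        (((S.card : ℝ) * p ^ (S.card - 1)) * (1 - p) ^ (n - S.card) +
          p ^ S.card * (((n - S.card : ℕ) : ℝ) * (1 - p) ^ (n - S.card - 1) * (0 - 1)))) p := by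
      apply HasDerivAt.fun_sum
      intro S _
      exact ((hasDerivAt_pow S.card p).mul
        (((hasDerivAt_const p (1:ℝ)).sub (hasDerivAt_id p)).pow (n - S.card))).const_mul
        (shEnt (marg μ S))
    have halg := key_alg (V := V) (fun S => shEnt (marg μ S)) p
    have hΦeq : Φ p = ∑ S : Finset V, shEnt (marg μ S) *
        (((S.card : ℝ) * p ^ (S.card - 1)) * (1 - p) ^ (n - S.card) +
          p ^ S.card * (((n - S.card : ℕ) : ℝ) * (1 - p) ^ (n - S.card - 1) * (0 - 1))) := by
      rw [hΦ]
      simp only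
      rw [Finset.sum_congr rfl fun S _ => by rw [hcond S]]
      exact halg.symm
    rw [hΦeq]
    exact hd
  have hΦcont : Continuous Φ := by
    rw [hΦ]
    apply continuous_finset_sum
    intro S _
    fun_prop
  have hint : ∫ p in (0:ℝ)..1, Φ p = G 1 - G 0 :=
    intervalIntegral.integral_eq_sub_of_hasDerivAt hderiv (hΦcont.intervalIntegrable 0 1)
  have hG1 : G 1 = shEnt μ := by
    rw [hG]
    simp only
    rw [Finset.sum_eq_single Finset.univ]
    · rw [shEnt_marg_univ]
      simp [hn]
    · intro S _ hS
      have hlt : S.card < n := by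
        have hss : S ⊂ Finset.univ := Finset.ssubset_univ_iff.mpr hS
        simpa [hn] using Finset.card_lt_card hss
      have hne : n - S.card ≠ 0 := by omega
      simp [zero_pow hne]
    · simp
  have hG0 : G 0 = 0 := by
    rw [hG]
    simp only
    apply Finset.sum_eq_zero
    intro S _
    by_cases hS : S = ∅
    · subst hS
      rw [shEnt_marg_empty μ hsum, zero_mul]
    · have hne : S.card ≠ 0 := by simpa [Finset.card_eq_zero] using hS
      simp [zero_pow hne]
  have hInt : ∀ p : ℝ, (∑ S : Finset V, p ^ S.card * (1 - p) ^ (n - S.card) *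
      ((1 / (n : ℝ)) * ∑ v : V, condEnt μ v (S.erase v))) = (1 / (n : ℝ)) * Φ p := by
    intro p
    rw [hΦ]
    simp only
    rw [Finset.mul_sum]
    exact Finset.sum_congr rfl fun S _ => by ring
  calc (1 / (n : ℝ)) * shEnt μ
      = (1 / (n : ℝ)) * (G 1 - G 0) := by rw [hG1, hG0, sub_zero]
    _ = (1 / (n : ℝ)) * ∫ p in (0:ℝ)..1, Φ p := by rw [hint]
    _ = ∫ p in (0:ℝ)..1, (1 / (n : ℝ)) * Φ p := (intervalIntegral.integral_const_mul _ _).symm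
    _ = ∫ p in (0:ℝ)..1, ∑ S : Finset V, p ^ S.card * (1 - p) ^ (n - S.card) *
          ((1 / (n : ℝ)) * ∑ v : V, condEnt μ v (S.erase v)) :=
        intervalIntegral.integral_congr (fun p _ => (hInt p).symm)
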